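/- If V ≡ U₀ | !U₁ (usage congruence) and φ; Φ ⊢ V ⟶ V' (one step of usage reduction), then V' ≡ W | !U₁ for some usage W with φ; Φ ⊢ U₀ | U₁ ⟶ W. -/

import Mathlib

namespace PiSpan

/-! ### Indices: integer expressions over index variables, with `∞` -/

abbrev IVar := ℕ

/-- Indices, built from index variables, function symbols (constants, addition,
multiplication, truncated subtraction, max, min) and `∞`. -/
inductive Idx : Type where
  | var : IVar → Idx
  | const : ℕ → Idx
  | add : Idx → Idx → Idx
  | mul : Idx → Idx → Idx
  | sub : Idx → Idx → Idx
  | imax : Idx → Idx → Idx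
  | imin : Idx → Idx → Idx
  | inf : Idx
  deriving DecidableEq

/-- Valuations of index variables. -/
abbrev Val := IVar → ℕ

/-- Interpretation of an index in `ℕ∞` under a valuation. -/
noncomputable def Idx.eval (ρ : Val) : Idx → ℕ∞
  | .var i => (ρ i : ℕ∞)
  | .const n => (n : ℕ∞)
  | .add I J => I.eval ρ + J.eval ρ
  | .mul I J => I.eval ρ * J.eval ρ
  | .sub I J => I.eval ρ - J.eval ρ
  | .imax I J => max (I.eval ρ) (J.eval ρ)
  | .imin I J => min (I.eval ρ) (J.eval ρ)
  | .inf => ⊤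

/-- Free index variables of an index. -/
def Idx.fv : Idx → Finset IVar
  | .var i => {i}
  | .const _ => ∅
  | .add I J => I.fv ∪ J.fv
  | .mul I J => I.fv ∪ J.fv
  | .sub I J => I.fv ∪ J.fv
  | .imax I J => I.fv ∪ J.fv
  | .imin I J => I.fv ∪ J.fv
  | .inf => ∅

/-- Substitution of the index `J` for the index variable `i`. -/
def Idx.subst : Idx → IVar → Idx → Idx
  | .var x, i, J => if x = i then J else .var x
  | .const n, _, _ => .const n
  | .add a b, i, J => .add (a.subst i J) (b.subst i J)
  | .mul a b, i, J => .mul (a.subst i J) (b.subst i J)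
  | .sub a b, i, J => .sub (a.subst i J) (b.subst i J)
  | .imax a b, i, J => .imax (a.subst i J) (b.subst i J)
  | .imin a b, i, J => .imin (a.subst i J) (b.subst i J)
  | .inf, _, _ => .inf

/-- A constraint `I ⋈ J` between two indices, for a binary relation `⋈` on `ℕ∞`. -/
structure Constraint where
  lhs : Idx
  rel : ℕ∞ → ℕ∞ → Prop
  rhs : Idx

/-- Satisfaction of a constraint by a valuation. -/
def Constraint.sat (ρ : Val) (C : Constraint) : Prop :=
  C.rel (C.lhs.eval ρ) (C.rhs.eval ρ)

def Constraint.fv (C : Constraint) : Finset IVar := C.lhs.fv ∪ C.rhs.fv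

def Constraint.subst (C : Constraint) (i : IVar) (J : Idx) : Constraint :=
  ⟨C.lhs.subst i J, C.rel, C.rhs.subst i J⟩

/-- A (finite) set of constraints. -/
abbrev CSet := List Constraint

def satAll (ρ : Val) (Φ : CSet) : Prop := ∀ C ∈ Φ, C.sat ρ

/-- `entails φ Φ C` : every valuation satisfying `Φ` satisfies `C`. -/
def entails (_φ : Finset IVar) (Φ : CSet) (C : Constraint) : Prop :=
  ∀ ρ : Val, satAll ρ Φ → C.sat ρ

/-- Semantic comparison of indices under the constraints `Φ`. -/
def semLe (_φ : Finset IVar) (Φ : CSet) (I J : Idx) : Prop :=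
  ∀ ρ : Val, satAll ρ Φ → I.eval ρ ≤ J.eval ρ

/-- Intervals `[I, J]` of indices. -/
structure Interval where
  lo : Idx
  hi : Idx
  deriving DecidableEq

def Interval.subst (A : Interval) (i : IVar) (J : Idx) : Interval :=
  ⟨A.lo.subst i J, A.hi.subst i J⟩

/-- `semIncl φ Φ A B` : the interval `A` is included in `B`, under every
valuation satisfying `Φ`. -/
def semIncl (_φ : Finset IVar) (Φ : CSet) (A B : Interval) : Prop :=
  ∀ ρ : Val, satAll ρ Φ → B.lo.eval ρ ≤ A.lo.eval ρ ∧ A.hi.eval ρ ≤ B.hi.eval ρ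

/-- Semantic equality of intervals under the constraints `Φ`. -/
def semEqI (_φ : Finset IVar) (Φ : CSet) (A B : Interval) : Prop :=
  ∀ ρ : Val, satAll ρ Φ → A.lo.eval ρ = B.lo.eval ρ ∧ A.hi.eval ρ = B.hi.eval ρ

/-- Capacities: either a single index `J` (to be understood as `[-∞, J]`)
or an interval `[I, J]`. -/
inductive Cap where
  | single : Idx → Cap
  | intv : Idx → Idx → Cap
  deriving DecidableEq

def Cap.subst : Cap → IVar → Idx → Cap
  | .single a, i, J => .single (a.subst i J)
  | .intv a b, i, J => .intv (a.subst i J) (b.subst i J)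

/-- `capLe φ Φ c d` : inclusion of capacities, a single index `J` being
understood as the interval `[-∞, J]`. -/
def capLe (φ : Finset IVar) (Φ : CSet) : Cap → Cap → Prop
  | .single I, .single J => semLe φ Φ I J
  | .single _, .intv _ _ => False
  | .intv _ J, .single J' => semLe φ Φ J J'
  | .intv I J, .intv I' J' => semLe φ Φ I' I ∧ semLe φ Φ J J'

/-- Componentwise sum of intervals: `[I,J] + [I',J'] = [I+I', J+J']`. -/
def Interval.add (A B : Interval) : Interval := ⟨A.lo.add B.lo, A.hi.add B.hi⟩

/-- Sum of an interval and a capacity: `[I,J] + J' = [I, J+J']` (single index)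
and componentwise sum for an interval capacity. -/
def Interval.addCap (A : Interval) : Cap → Interval
  | .single J => ⟨A.lo, A.hi.add J⟩
  | .intv I J => ⟨A.lo.add I, A.hi.add J⟩

/-- The operation `⊞`: `A ⊞ J = [0, lo(A)+J]` and `A ⊞ [I,J] = [hi(A)+I, lo(A)+J]`. -/
def Interval.boxPlus (A : Interval) : Cap → Interval
  | .single J => ⟨.const 0, A.lo.add J⟩
  | .intv I J => ⟨A.hi.add I, A.lo.add J⟩

/-- The join `[I,J] ⊔ [I',J'] = [max(I,I'), max(J,J')]`. -/
def Interval.join (A B : Interval) : Interval := ⟨A.lo.imax B.lo, A.hi.imax B.hi⟩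

def zeroI : Interval := ⟨.const 0, .const 0⟩
def oneI : Interval := ⟨.const 1, .const 1⟩
def constI (n : ℕ) : Interval := ⟨.const n, .const n⟩

/-! ### Usages -/

/-- Usages: CCS-like processes on a single channel, where each action carries
an obligation interval and a capacity. -/
inductive Usage where
  | nil : Usage
  | par : Usage → Usage → Usage
  | inp : Interval → Cap → Usage → Usage
  | out : Interval → Cap → Usage → Usage
  | bang : Usage → Usage
  | choice : Usage → Usage → Usage
  deriving DecidableEq

/-- Delaying `↑^{A}U` : adds `A` to the obligation of every top-level action. -/
def Usage.delay (A : Interval) : Usage → Usage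
  | .nil => .nil
  | .par U V => .par (U.delay A) (V.delay A)
  | .inp B c U => .inp (A.add B) c U
  | .out B c U => .out (A.add B) c U
  | .bang U => .bang (U.delay A)
  | .choice U V => .choice (U.delay A) (V.delay A)

/-- Delaying by a capacity `↑^{J_c}U`. -/
def Usage.delayCap (c : Cap) : Usage → Usage
  | .nil => .nil
  | .par U V => .par (U.delayCap c) (V.delayCap c)
  | .inp B d U => .inp (B.addCap c) d U
  | .out B d U => .out (B.addCap c) d U
  | .bang U => .bang (U.delayCap c)
  | .choice U V => .choice (U.delayCap c) (V.delayCap c)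

def Usage.subst : Usage → IVar → Idx → Usage
  | .nil, _, _ => .nil
  | .par U V, i, J => .par (U.subst i J) (V.subst i J)
  | .inp B c U, i, J => .inp (B.subst i J) (c.subst i J) (U.subst i J)
  | .out B c U, i, J => .out (B.subst i J) (c.subst i J) (U.subst i J)
  | .bang U, i, J => .bang (U.subst i J)
  | .choice U V, i, J => .choice (U.subst i J) (V.subst i J)

/-- Congruence on usages. -/
inductive UCongr : Usage → Usage → Prop
  | refl : UCongr U U
  | symm : UCongr U V → UCongr V U
  | trans : UCongr U V → UCongr V W → UCongr U W
  | parNil : UCongr (.par U .nil) U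
  | parComm : UCongr (.par U V) (.par V U)
  | parAssoc : UCongr (.par U (.par V W)) (.par (.par U V) W)
  | bangNil : UCongr (.bang .nil) .nil
  | bangUnfold : UCongr (.bang U) (.par (.bang U) U)
  | bangPar : UCongr (.bang (.par U V)) (.par (.bang U) (.bang V))
  | bangBang : UCongr (.bang (.bang U)) (.bang U)
  | parCtx : UCongr U U' → UCongr V V' → UCongr (.par U V) (.par U' V')
  | inpCtx : UCongr U U' → UCongr (.inp A c U) (.inp A c U')
  | outCtx : UCongr U U' → UCongr (.out A c U) (.out A c U')
  | bangCtx : UCongr U U' → UCongr (.bang U) (.bang U')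
  | choiceCtx : UCongr U U' → UCongr V V' → UCongr (.choice U V) (.choice U' V')

/-- Result of a usage reduction step: a usage, or the error `Error`. -/
inductive URes where
  | ok : Usage → URes
  | err : URes

/-- Congruence extended to reduction results. -/
inductive RCongr : URes → URes → Prop
  | ok : UCongr U V → RCongr (.ok U) (.ok V)
  | err : RCongr .err .err

/-- Side condition for a successful synchronization:
`Φ ⊨ B ⊆ A ⊞ I_c` and `Φ ⊨ A ⊆ B ⊞ J_c`. -/
def goodSync (φ : Finset IVar) (Φ : CSet) (A : Interval) (ic : Cap)
    (B : Interval) (jc : Cap) : Prop :=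
  semIncl φ Φ B (A.boxPlus ic) ∧ semIncl φ Φ A (B.boxPlus jc)

/-- Reduction of usages (possibly to `Error`). -/
inductive URed (φ : Finset IVar) (Φ : CSet) : Usage → URes → Prop
  | comm : goodSync φ Φ A ic B jc →
      URed φ Φ (.par (.inp A ic U) (.out B jc V)) (.ok ((U.par V).delay (A.join B)))
  | commErr : ¬ goodSync φ Φ A ic B jc →
      URed φ Φ (.par (.inp A ic U) (.out B jc V)) .err
  | choiceL : URed φ Φ (.choice U V) (.ok U)
  | choiceR : URed φ Φ (.choice U V) (.ok V)
  | parCtx : URed φ Φ U (.ok U') → URed φ Φ (.par U V) (.ok (.par U' V))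
  | parErr : URed φ Φ U .err → URed φ Φ (.par U V) .err
  | congr : UCongr U U' → URed φ Φ U' R' → RCongr R' R → URed φ Φ U R

/-- Multi-step reduction of usages (never going through an error). -/
def URedStar (φ : Finset IVar) (Φ : CSet) : Usage → Usage → Prop :=
  Relation.ReflTransGen (fun U V => URed φ Φ U (.ok V))

/-- Multi-step reduction towards a result, possibly ending with an error step. -/
def URedStarRes (φ : Finset IVar) (Φ : CSet) (U : Usage) : URes → Prop
  | .ok V => URedStar φ Φ U V
  | .err => ∃ W, URedStar φ Φ U W ∧ URed φ Φ W .err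

/-- A usage is reliable when no reduction sequence from it leads to an error. -/
def Reliable (φ : Finset IVar) (Φ : CSet) (U : Usage) : Prop :=
  ∀ V, URedStar φ Φ U V → ¬ URed φ Φ V .err

/-- The subusage relation. -/
inductive SubU (φ : Finset IVar) (Φ : CSet) : Usage → Usage → Prop
  | toNil : SubU φ Φ U .nil
  | choiceElimL : SubU φ Φ (.choice U V) U
  | choiceElimR : SubU φ Φ (.choice U V) V
  | choiceCtxL : SubU φ Φ U U' → SubU φ Φ (.choice U V) (.choice U' V)
  | choiceCtxR : SubU φ Φ V V' → SubU φ Φ (.choice U V) (.choice U V')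
  | parCtx : SubU φ Φ U U' → SubU φ Φ (.par U V) (.par U' V)
  | bangCtx : SubU φ Φ U U' → SubU φ Φ (.bang U) (.bang U')
  | congr : UCongr U U' → SubU φ Φ U' V' → UCongr V' V → SubU φ Φ U V
  | trans : SubU φ Φ U U' → SubU φ Φ U' U'' → SubU φ Φ U U''
  | inpCtx : SubU φ Φ U U' → SubU φ Φ (.inp A c U) (.inp A c U')
  | outCtx : SubU φ Φ U U' → SubU φ Φ (.out A c U) (.out A c U')
  | inpWeak : semIncl φ Φ B A → capLe φ Φ ic jc → SubU φ Φ (.inp A ic U) (.inp B jc U)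
  | outWeak : semIncl φ Φ B A → capLe φ Φ ic jc → SubU φ Φ (.out A ic U) (.out B jc U)
  | inpScope : SubU φ Φ (.par (.inp A jc U) (V.delay (A.addCap jc))) (.inp A jc (.par U V))
  | outScope : SubU φ Φ (.par (.out A jc U) (V.delay (A.addCap jc))) (.out A jc (.par U V))

/-- Subusage extended to reduction results, with the convention that
`Error ⊑ W` for every usage `W` and the only result below `Error` is `Error`. -/
def SubR (φ : Finset IVar) (Φ : CSet) : URes → URes → Prop
  | .err, _ => True
  | .ok _, .err => False
  | .ok U, .ok V => SubU φ Φ U V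

/-! ### Auxiliary development -/

section Aux

local infix:50 " ≋ " => UCongr

instance : Trans UCongr UCongr UCongr := ⟨UCongr.trans⟩

lemma UCongr.parL {U U' V : Usage} (h : U ≋ U') : Usage.par U V ≋ Usage.par U' V :=
  .parCtx h .refl

lemma UCongr.parR {U V V' : Usage} (h : V ≋ V') : Usage.par U V ≋ Usage.par U V' :=
  .parCtx .refl h

lemma uc_nil_par {U : Usage} : Usage.par .nil U ≋ U := .trans .parComm .parNil

lemma uc_assoc' {U V W : Usage} : Usage.par (.par U V) W ≋ Usage.par U (.par V W) :=
  .symm .parAssoc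

/-- Build a parallel composition from a list. -/
def buildL (l : List Usage) : Usage := l.foldr .par .nil

@[simp] lemma buildL_nil : buildL [] = .nil := rfl
@[simp] lemma buildL_cons {a : Usage} {l : List Usage} :
    buildL (a :: l) = a.par (buildL l) := rfl

lemma buildL_append (l m : List Usage) :
    buildL (l ++ m) ≋ (buildL l).par (buildL m) := by
  induction l with
  | nil => exact .symm uc_nil_par
  | cons a l ih => simpa using (UCongr.parR ih).trans .parAssoc

lemma buildL_perm {l m : List Usage} (h : l.Perm m) : buildL l ≋ buildL m := by
  induction h with
  | nil => exact .refl
  | cons a _ ih => exact .parCtx .refl ih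
  | swap a b t => exact .trans .parAssoc (.trans (.parCtx .parComm .refl) uc_assoc')
  | trans _ _ ih1 ih2 => exact ih1.trans ih2

lemma uc_bang_dup {U : Usage} : Usage.bang U ≋ Usage.par (.bang U) (.bang U) :=
  (UCongr.symm .bangBang).trans <| (UCongr.bangCtx .bangUnfold).trans <|
    UCongr.bangPar.trans (UCongr.parL .bangBang)

lemma bang_emit {a : Usage} {l : List Usage} (h : a ∈ l) :
    Usage.bang (buildL l) ≋ Usage.par (.bang (buildL l)) a := by
  have hperm : l.Perm (a :: l.erase a) := l.perm_cons_erase h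
  have h1 : Usage.bang (buildL l) ≋ Usage.bang (buildL (a :: l.erase a)) :=
    .bangCtx (buildL_perm hperm)
  set t := buildL (l.erase a) with ht
  have h2 : Usage.bang (buildL (a :: l.erase a)) ≋
      Usage.par (.bang (buildL (a :: l.erase a))) a := by
    simp only [buildL_cons, ← ht]
    calc Usage.bang (a.par t) ≋ Usage.par (.bang a) (.bang t) := UCongr.bangPar
      _ ≋ Usage.par (.par (.bang a) a) (.bang t) := UCongr.parL .bangUnfold
      _ ≋ Usage.par (.bang a) (.par a (.bang t)) := uc_assoc'
      _ ≋ Usage.par (.bang a) (.par (.bang t) a) := UCongr.parR .parComm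
      _ ≋ Usage.par (.par (.bang a) (.bang t)) a := UCongr.parAssoc
      _ ≋ Usage.par (.bang (a.par t)) a := UCongr.parL (.symm .bangPar)
  exact h1.trans (h2.trans (UCongr.parL (.bangCtx (buildL_perm hperm.symm))))

lemma bang_emit_bang {a : Usage} {l : List Usage} (h : a ∈ l) :
    Usage.bang (buildL l) ≋ Usage.par (.bang (buildL l)) (.bang a) := by
  have hperm : l.Perm (a :: l.erase a) := l.perm_cons_erase h
  have h1 : Usage.bang (buildL l) ≋ Usage.bang (buildL (a :: l.erase a)) :=
    .bangCtx (buildL_perm hperm)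
  set t := buildL (l.erase a) with ht
  have h2 : Usage.bang (buildL (a :: l.erase a)) ≋
      Usage.par (.bang (buildL (a :: l.erase a))) (.bang a) := by
    simp only [buildL_cons, ← ht]
    calc Usage.bang (a.par t) ≋ Usage.par (.bang a) (.bang t) := UCongr.bangPar
      _ ≋ Usage.par (.par (.bang a) (.bang a)) (.bang t) := UCongr.parL uc_bang_dup
      _ ≋ Usage.par (.bang a) (.par (.bang a) (.bang t)) := uc_assoc'
      _ ≋ Usage.par (.bang a) (.par (.bang t) (.bang a)) := UCongr.parR .parComm
      _ ≋ Usage.par (.par (.bang a) (.bang t)) (.bang a) := UCongr.parAssoc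
      _ ≋ Usage.par (.bang (a.par t)) (.bang a) := UCongr.parL (.symm .bangPar)
  exact h1.trans (h2.trans (UCongr.parL (.bangCtx (buildL_perm hperm.symm))))

lemma bang_absorb {b a' : Usage} {l : List Usage} (h : b ≋ a') (ha : a' ∈ l) :
    Usage.par (.bang (buildL l)) b ≋ Usage.bang (buildL l) :=
  UCongr.symm ((bang_emit ha).trans (UCongr.parR h.symm))

lemma absorb_all {lb s : List Usage} (h : ∀ a ∈ lb, ∃ b ∈ s, a ≋ b) :
    Usage.par (buildL lb) (.bang (buildL s)) ≋ Usage.bang (buildL s) := by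
  induction lb with
  | nil => exact uc_nil_par
  | cons a t ih =>
    obtain ⟨b, hb, hab⟩ := h a List.mem_cons_self
    calc Usage.par (buildL (a :: t)) (.bang (buildL s))
        ≋ a.par ((buildL t).par (.bang (buildL s))) := by
          simp only [buildL_cons]; exact uc_assoc'
      _ ≋ a.par (.bang (buildL s)) :=
          UCongr.parR (ih fun x hx => h x (List.mem_cons_of_mem _ hx))
      _ ≋ Usage.par (.bang (buildL s)) a := UCongr.parComm
      _ ≋ Usage.bang (buildL s) := bang_absorb hab hb

lemma bang_subsume {s t : List Usage} (h : ∀ a ∈ t, ∃ b ∈ s, a ≋ b) :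
    Usage.bang (buildL s) ≋ Usage.par (.bang (buildL s)) (.bang (buildL t)) := by
  induction t with
  | nil => exact .symm ((UCongr.parR .bangNil).trans .parNil)
  | cons a t ih =>
    obtain ⟨b, hb, hab⟩ := h a List.mem_cons_self
    have hemit : Usage.bang (buildL s) ≋ Usage.par (.bang (buildL s)) (.bang a) :=
      (bang_emit_bang hb).trans (UCongr.parR (.bangCtx hab.symm))
    calc Usage.bang (buildL s)
        ≋ Usage.par (.bang (buildL s)) (.bang a) := hemit
      _ ≋ Usage.par (.par (.bang (buildL s)) (.bang (buildL t))) (.bang a) :=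
          UCongr.parL (ih fun x hx => h x (List.mem_cons_of_mem _ hx))
      _ ≋ Usage.par (.bang (buildL s)) (.par (.bang (buildL t)) (.bang a)) := uc_assoc'
      _ ≋ Usage.par (.bang (buildL s)) (.par (.bang a) (.bang (buildL t))) := UCongr.parR .parComm
      _ ≋ Usage.par (.bang (buildL s)) (.bang (a.par (buildL t))) := UCongr.parR (.symm .bangPar)

lemma bang_mset {s t : List Usage} (h1 : ∀ a ∈ s, ∃ b ∈ t, a ≋ b)
    (h2 : ∀ b ∈ t, ∃ a ∈ s, b ≋ a) :
    Usage.bang (buildL s) ≋ Usage.bang (buildL t) :=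
  (bang_subsume h2).trans ((bang_subsume h1).trans .parComm).symm

end Aux
section Dec

local infix:50 " ≋ " => UCongr

/-- Structural relation on atoms: same head with congruent bodies. -/
inductive ARel : Usage → Usage → Prop
  | inp {A c u u'} : UCongr u u' → ARel (.inp A c u) (.inp A c u')
  | out {A c u u'} : UCongr u u' → ARel (.out A c u) (.out A c u')
  | choice {u v u' v'} : UCongr u u' → UCongr v v' → ARel (.choice u v) (.choice u' v')

lemma ARel.toUC {a b : Usage} (h : ARel a b) : a ≋ b := by
  cases h with
  | inp h => exact .inpCtx h
  | out h => exact .outCtx h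
  | choice h1 h2 => exact .choiceCtx h1 h2

lemma ARel.symm {a b : Usage} (h : ARel a b) : ARel b a := by
  cases h with
  | inp h => exact .inp h.symm
  | out h => exact .out h.symm
  | choice h1 h2 => exact .choice h1.symm h2.symm

lemma ARel.trans {a b c : Usage} (h : ARel a b) (h' : ARel b c) : ARel a c := by
  cases h with
  | inp h => cases h' with | inp h' => exact .inp (h.trans h')
  | out h => cases h' with | out h' => exact .out (h.trans h')
  | choice h1 h2 => cases h' with | choice h1' h2' => exact .choice (h1.trans h1') (h2.trans h2')

def IsAtom : Usage → Prop
  | .inp _ _ _ => True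
  | .out _ _ _ => True
  | .choice _ _ => True
  | _ => False

lemma ARel.rfl {a : Usage} (h : IsAtom a) : ARel a a := by
  cases a <;> simp [IsAtom] at h <;> constructor <;> exact UCongr.refl

lemma ARel.atom_left {a b : Usage} (h : ARel a b) : IsAtom a := by cases h <;> trivial
lemma ARel.atom_right {a b : Usage} (h : ARel a b) : IsAtom b := by cases h <;> trivial

/-- Decomposition of a usage into its linear atoms and its replicated atoms. -/
def dec : Usage → Multiset Usage × Multiset Usage
  | .nil => (0, 0)
  | .par U V => ((dec U).1 + (dec V).1, (dec U).2 + (dec V).2)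
  | .inp A c U => ({Usage.inp A c U}, 0)
  | .out A c U => ({Usage.out A c U}, 0)
  | .bang U => (0, (dec U).1 + (dec U).2)
  | .choice U V => ({Usage.choice U V}, 0)

@[simp] lemma dec_nil : dec .nil = (0, 0) := rfl
@[simp] lemma dec_par {U V : Usage} :
    dec (.par U V) = ((dec U).1 + (dec V).1, (dec U).2 + (dec V).2) := rfl
@[simp] lemma dec_inp {A c U} : dec (.inp A c U) = ({Usage.inp A c U}, 0) := rfl
@[simp] lemma dec_out {A c U} : dec (.out A c U) = ({Usage.out A c U}, 0) := rfl
@[simp] lemma dec_bang {U : Usage} : dec (.bang U) = (0, (dec U).1 + (dec U).2) := rfl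
@[simp] lemma dec_choice {U V : Usage} : dec (.choice U V) = ({Usage.choice U V}, 0) := rfl

lemma dec_atoms : ∀ (U : Usage), (∀ a ∈ (dec U).1, IsAtom a) ∧ ∀ a ∈ (dec U).2, IsAtom a := by
  intro U
  induction U with
  | nil => simp [dec]
  | par U V ihU ihV =>
    refine ⟨fun a ha => ?_, fun a ha => ?_⟩ <;>
      · simp only [dec, Multiset.mem_add] at ha
        rcases ha with h | h
        · first | exact ihU.1 a h | exact ihU.2 a h
        · first | exact ihV.1 a h | exact ihV.2 a h
  | inp A c U ih => simp [dec, IsAtom]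
  | out A c U ih => simp [dec, IsAtom]
  | bang U ih =>
    refine ⟨by simp [dec], fun a ha => ?_⟩
    simp only [dec, Multiset.mem_add] at ha
    rcases ha with h | h
    · exact ih.1 a h
    · exact ih.2 a h
  | choice U V ihU ihV => simp [dec, IsAtom]

lemma dec_atoms1 {U : Usage} {a : Usage} (h : a ∈ (dec U).1) : IsAtom a := (dec_atoms U).1 a h
lemma dec_atoms2 {U : Usage} {a : Usage} (h : a ∈ (dec U).2) : IsAtom a := (dec_atoms U).2 a h

lemma dec_atom {a : Usage} (h : IsAtom a) : dec a = ({a}, 0) := by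
  cases a <;> simp [IsAtom] at h <;> rfl

lemma dec_buildL {l : List Usage} (h : ∀ a ∈ l, IsAtom a) :
    dec (buildL l) = ((l : Multiset Usage), 0) := by
  induction l with
  | nil => rfl
  | cons a t ih =>
    have ht : dec (buildL t) = ((t : Multiset Usage), 0) :=
      ih fun x hx => h x (List.mem_cons_of_mem _ hx)
    have ha := dec_atom (h a List.mem_cons_self)
    show dec (Usage.par a (buildL t)) = _
    simp only [dec, ht, ha]
    simp [Multiset.singleton_add]

/-! ### The multiset characterization of congruence -/

def MAbs (S m : Multiset Usage) : Prop := ∀ a ∈ m, ∃ b ∈ S, ARel a b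

def MSet (S T : Multiset Usage) : Prop :=
  (∀ a ∈ S, ∃ b ∈ T, ARel a b) ∧ (∀ b ∈ T, ∃ a ∈ S, ARel b a)

def Eqv (p q : Multiset Usage × Multiset Usage) : Prop :=
  MSet p.2 q.2 ∧ ∃ La Lb Ma Mb, p.1 = La + Lb ∧ q.1 = Ma + Mb ∧
    Multiset.Rel ARel La Ma ∧ MAbs p.2 Lb ∧ MAbs q.2 Mb

lemma MAbs.zero {S : Multiset Usage} : MAbs S 0 := by intro a ha; simp at ha

lemma MAbs.mono_container {S T m : Multiset Usage} (hST : ∀ b ∈ S, ∃ c ∈ T, ARel b c)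
    (h : MAbs S m) : MAbs T m := by
  intro a ha
  obtain ⟨b, hb, hab⟩ := h a ha
  obtain ⟨c, hc, hbc⟩ := hST b hb
  exact ⟨c, hc, hab.trans hbc⟩

lemma MAbs.mono_sub {S m m' : Multiset Usage} (hmm : m' ≤ m) (h : MAbs S m) : MAbs S m' :=
  fun a ha => h a (Multiset.mem_of_le hmm ha)

lemma MAbs.add {S m m' : Multiset Usage} (h : MAbs S m) (h' : MAbs S m') : MAbs S (m + m') := by
  intro a ha
  rcases Multiset.mem_add.1 ha with h1 | h1
  · exact h a h1
  · exact h' a h1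

lemma MSet.symm {S T : Multiset Usage} (h : MSet S T) : MSet T S :=
⟨h.2, h.1⟩

lemma MSet.trans {S T R : Multiset Usage} (h : MSet S T) (h' : MSet T R) : MSet S R := by
  constructor
  · intro a ha
    obtain ⟨b, hb, hab⟩ := h.1 a ha
    obtain ⟨c, hc, hbc⟩ := h'.1 b hb
    exact ⟨c, hc, hab.trans hbc⟩
  · intro c hc
    obtain ⟨b, hb, hcb⟩ := h'.2 c hc
    obtain ⟨a, ha, hba⟩ := h.2 b hb
    exact ⟨a, ha, hcb.trans hba⟩

lemma rel_refl_atoms {m : Multiset Usage} (h : ∀ a ∈ m, IsAtom a) :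
    Multiset.Rel ARel m m := by
  induction m using Multiset.induction with
  | empty => exact .zero
  | cons a t ih =>
    exact .cons (ARel.rfl (h a (Multiset.mem_cons_self a t)))
      (ih fun x hx => h x (Multiset.mem_cons_of_mem hx))

lemma rel_mem_left {m n : Multiset Usage} (h : Multiset.Rel ARel m n) :
    ∀ a ∈ m, ∃ b ∈ n, ARel a b := by
  induction h with
  | zero => simp
  | @cons a b m n hab _ ih =>
    intro x hx
    rcases Multiset.mem_cons.1 hx with rfl | hx
    · exact ⟨b, Multiset.mem_cons_self b n, hab⟩
    · obtain ⟨c, hc, hxc⟩ := ih x hx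
      exact ⟨c, Multiset.mem_cons_of_mem hc, hxc⟩

lemma rel_symm {m n : Multiset Usage} (h : Multiset.Rel ARel m n) :
    Multiset.Rel ARel n m := by
  induction h with
  | zero => exact .zero
  | cons hab _ ih => exact .cons hab.symm ih

lemma rel_trans {m n p : Multiset Usage} (h : Multiset.Rel ARel m n)
    (h' : Multiset.Rel ARel n p) : Multiset.Rel ARel m p := by
  induction h generalizing p with
  | zero =>
    rw [Multiset.rel_zero_left] at h'; subst h'; exact .zero
  | @cons a b m n hab _ ih =>
    obtain ⟨c, p', hbc, hrel, rfl⟩ := Multiset.rel_cons_left.1 h'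
    exact .cons (hab.trans hbc) (ih hrel)

/-- Riesz decomposition for multisets. -/
lemma riesz {α : Type*} [DecidableEq α] {a b c d : Multiset α} (h : a + b = c + d) :
    ∃ e f g k, a = e + f ∧ b = g + k ∧ c = e + g ∧ d = f + k := by
  refine ⟨a ∩ c, a - c, c - a, b - (c - a), ?_, ?_, ?_, ?_⟩ <;>
    · ext x
      have hx := congrArg (Multiset.count x) h
      simp only [Multiset.count_add, Multiset.count_sub, Multiset.count_inter] at *
      omega

lemma Eqv.refl_of_atoms {p : Multiset Usage × Multiset Usage}
    (h1 : ∀ a ∈ p.1, IsAtom a) (h2 : ∀ a ∈ p.2, IsAtom a) : Eqv p p :=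
  ⟨⟨fun a ha => ⟨a, ha, ARel.rfl (h2 a ha)⟩, fun a ha => ⟨a, ha, ARel.rfl (h2 a ha)⟩⟩,
   p.1, 0, p.1, 0, by simp, by simp, rel_refl_atoms h1, MAbs.zero, MAbs.zero⟩

lemma Eqv.symm {p q : Multiset Usage × Multiset Usage} (h : Eqv p q) : Eqv q p := by
  obtain ⟨hS, La, Lb, Ma, Mb, h1, h2, hrel, hLb, hMb⟩ := h
  exact ⟨hS.symm, Ma, Mb, La, Lb, h2, h1, rel_symm hrel, hMb, hLb⟩

lemma Eqv.trans {p q r : Multiset Usage × Multiset Usage} (h : Eqv p q) (h' : Eqv q r) :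
    Eqv p r := by
  obtain ⟨hS, La, Lb, Ma, Mb, h1, h2, hrel, hLb, hMb⟩ := h
  obtain ⟨hS', Na, Nb, Oa, Ob, h1', h2', hrel', hNb, hOb⟩ := h'
  obtain ⟨e, f, g, k, hMa, hMb', hNa, hNb'⟩ := riesz (h2 ▸ h1'.symm ▸ rfl : Ma + Mb = Na + Nb)
  -- split La along Ma = e + f
  obtain ⟨La1, La2, hrel1, hrel2, hLa⟩ := Multiset.rel_add_right.1 (hMa ▸ hrel)
  -- split Oa along Na = e + g
  obtain ⟨Oa1, Oa2, hrel1', hrel2', hOa⟩ := Multiset.rel_add_left.1 (hNa ▸ hrel')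
  refine ⟨hS.trans hS', La1, La2 + Lb, Oa1, Oa2 + Ob, by rw [h1, hLa, add_assoc], by rw [h2', hOa, add_assoc],
    rel_trans hrel1 hrel1', ?_, ?_⟩
  · refine MAbs.add ?_ hLb
    -- La2 related to f ≤ Nb, absorbed by q.2, transported back to p.2 by hS.symm
    intro a ha
    obtain ⟨b, hb, hab⟩ := rel_mem_left hrel2 a ha
    have hbNb : b ∈ Nb := Multiset.mem_of_le (hNb' ▸ Multiset.le_add_right f k) hb
    obtain ⟨s, hs, hbs⟩ := hNb b hbNb
    obtain ⟨t, ht, hst⟩ := hS.2 s hs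
    exact ⟨t, ht, (hab.trans hbs).trans hst⟩
  · refine MAbs.add ?_ hOb
    intro a ha
    obtain ⟨b, hb, hab⟩ := rel_mem_left (rel_symm hrel2') a ha
    have hbMb : b ∈ Mb := Multiset.mem_of_le (hMb' ▸ Multiset.le_add_right g k) hb
    obtain ⟨s, hs, hbs⟩ := hMb b hbMb
    obtain ⟨t, ht, hst⟩ := hS'.1 s hs
    exact ⟨t, ht, (hab.trans hbs).trans hst⟩

end Dec
section Forward

lemma MAbs.mono_mem {S T m : Multiset Usage} (hsub : ∀ b ∈ S, b ∈ T) (h : MAbs S m) :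
    MAbs T m := fun a ha => (h a ha).imp fun b hb => ⟨hsub b hb.1, hb.2⟩

lemma MSet.add {S S' T T' : Multiset Usage} (h : MSet S T) (h' : MSet S' T') :
    MSet (S + S') (T + T') := by
  constructor
  · intro a ha
    rcases Multiset.mem_add.1 ha with h1 | h1
    · exact (h.1 a h1).imp fun b hb => ⟨Multiset.mem_add.2 (Or.inl hb.1), hb.2⟩
    · exact (h'.1 a h1).imp fun b hb => ⟨Multiset.mem_add.2 (Or.inr hb.1), hb.2⟩
  · intro a ha
    rcases Multiset.mem_add.1 ha with h1 | h1
    · exact (h.2 a h1).imp fun b hb => ⟨Multiset.mem_add.2 (Or.inl hb.1), hb.2⟩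
    · exact (h'.2 a h1).imp fun b hb => ⟨Multiset.mem_add.2 (Or.inr hb.1), hb.2⟩

lemma mset_of_mem {S T : Multiset Usage} (h1 : ∀ a ∈ S, a ∈ T) (h2 : ∀ a ∈ T, a ∈ S)
    (hat : ∀ a ∈ S, IsAtom a) : MSet S T :=
  ⟨fun a ha => ⟨a, h1 a ha, ARel.rfl (hat a ha)⟩,
   fun a ha => ⟨a, h2 a ha, ARel.rfl (hat a (h2 a ha))⟩⟩

lemma rel_single {a b : Usage} (h : ARel a b) :
    Multiset.Rel ARel {a} {b} := by
  rw [← Multiset.cons_zero a, ← Multiset.cons_zero b]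
  exact .cons h .zero

lemma eqv_pair {a b : Usage} (h : ARel a b) :
    Eqv ({a}, 0) ({b}, 0) :=
  ⟨⟨by simp, by simp⟩, {a}, 0, {b}, 0, by simp, by simp, rel_single h, MAbs.zero, MAbs.zero⟩

lemma Eqv.add {p q p' q' : Multiset Usage × Multiset Usage} (h : Eqv p q) (h' : Eqv p' q') :
    Eqv (p.1 + p'.1, p.2 + p'.2) (q.1 + q'.1, q.2 + q'.2) := by
  obtain ⟨hS, La, Lb, Ma, Mb, h1, h2, hrel, hLb, hMb⟩ := h
  obtain ⟨hS', La', Lb', Ma', Mb', h1', h2', hrel', hLb', hMb'⟩ := h'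
  refine ⟨hS.add hS', La + La', Lb + Lb', Ma + Ma', Mb + Mb',
    by rw [h1, h1', add_add_add_comm], by rw [h2, h2', add_add_add_comm],
    hrel.add hrel', ?_, ?_⟩
  · exact MAbs.add (MAbs.mono_mem (fun b hb => Multiset.mem_add.2 (Or.inl hb)) hLb)
      (MAbs.mono_mem (fun b hb => Multiset.mem_add.2 (Or.inr hb)) hLb')
  · exact MAbs.add (MAbs.mono_mem (fun b hb => Multiset.mem_add.2 (Or.inl hb)) hMb)
      (MAbs.mono_mem (fun b hb => Multiset.mem_add.2 (Or.inr hb)) hMb')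

lemma eqv_dec_refl (U : Usage) : Eqv (dec U) (dec U) :=
  Eqv.refl_of_atoms (fun _ ha => dec_atoms1 ha) (fun _ ha => dec_atoms2 ha)

theorem ucongr_eqv {U V : Usage} (h : UCongr U V) : Eqv (dec U) (dec V) := by
  induction h with
  | refl => exact eqv_dec_refl _
  | symm _ ih => exact ih.symm
  | trans _ _ ih1 ih2 => exact ih1.trans ih2
  | @parNil U =>
    have : dec (Usage.par U .nil) = dec U := by simp [dec]
    rw [this]; exact eqv_dec_refl _
  | @parComm U V =>
    have : dec (Usage.par U V) = dec (Usage.par V U) := by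
      simp [dec]; constructor <;> apply add_comm
    rw [this]; exact eqv_dec_refl _
  | @parAssoc U V W =>
    have : dec (Usage.par U (.par V W)) = dec (Usage.par (.par U V) W) := by
      simp [dec]; constructor <;> apply (add_assoc _ _ _).symm
    rw [this]; exact eqv_dec_refl _
  | bangNil =>
    have : dec (Usage.bang .nil) = dec Usage.nil := by simp [dec]
    rw [this]; exact eqv_dec_refl _
  | @bangUnfold U =>
    refine ⟨?_, 0, 0, 0, (dec U).1, by simp, by simp [dec], .zero, MAbs.zero, ?_⟩
    · refine mset_of_mem ?_ ?_ ?_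
      · intro a ha; simp only [dec, Multiset.mem_add] at *; tauto
      · intro a ha; simp only [dec, Multiset.mem_add] at *; tauto
      · intro a ha
        simp only [dec, Multiset.mem_add] at ha
        rcases ha with h | h
        · exact dec_atoms1 h
        · exact dec_atoms2 h
    · intro a ha
      refine ⟨a, ?_, ARel.rfl (dec_atoms1 ha)⟩
      simp only [dec, Multiset.mem_add]; tauto
  | @bangPar U V =>
    refine ⟨?_, 0, 0, 0, 0, by simp [dec], by simp [dec], .zero, MAbs.zero, MAbs.zero⟩
    refine mset_of_mem ?_ ?_ ?_
    · intro a ha; simp only [dec, Multiset.mem_add] at *; tauto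
    · intro a ha; simp only [dec, Multiset.mem_add] at *; tauto
    · intro a ha
      simp only [dec, Multiset.mem_add] at ha
      rcases ha with (h | h) | (h | h)
      · exact dec_atoms1 h
      · exact dec_atoms1 h
      · exact dec_atoms2 h
      · exact dec_atoms2 h
  | @bangBang U =>
    have : dec (Usage.bang (.bang U)) = dec (Usage.bang U) := by simp [dec]
    rw [this]; exact eqv_dec_refl _
  | parCtx _ _ ih1 ih2 => exact ih1.add ih2
  | @inpCtx U U' A c h _ => exact eqv_pair (.inp h)
  | @outCtx U U' A c h _ => exact eqv_pair (.out h)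
  | @bangCtx U U' h ih =>
    obtain ⟨hS, La, Lb, Ma, Mb, h1, h2, hrel, hLb, hMb⟩ := ih
    refine ⟨?_, 0, 0, 0, 0, by simp [dec], by simp [dec], .zero, MAbs.zero, MAbs.zero⟩
    constructor
    · intro a ha
      simp only [dec, Multiset.mem_add] at ha ⊢
      rcases ha with h' | h'
      · rw [h1] at h'
        rcases Multiset.mem_add.1 h' with h'' | h''
        · exact (rel_mem_left hrel a h'').imp fun b hb => ⟨Or.inl (h2 ▸
            Multiset.mem_add.2 (Or.inl hb.1)), hb.2⟩
        · obtain ⟨b, hb, hab⟩ := hLb a h''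
          obtain ⟨c, hc, hbc⟩ := hS.1 b hb
          exact ⟨c, Or.inr hc, hab.trans hbc⟩
      · exact (hS.1 a h').imp fun b hb => ⟨Or.inr hb.1, hb.2⟩
    · intro a ha
      simp only [dec, Multiset.mem_add] at ha ⊢
      rcases ha with h' | h'
      · rw [h2] at h'
        rcases Multiset.mem_add.1 h' with h'' | h''
        · obtain ⟨b, hb, hab⟩ := rel_mem_left (rel_symm hrel) a h''
          exact ⟨b, Or.inl (h1 ▸ Multiset.mem_add.2 (Or.inl hb)), hab⟩
        · obtain ⟨b, hb, hab⟩ := hMb a h''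
          obtain ⟨c, hc, hbc⟩ := hS.2 b hb
          exact ⟨c, Or.inr hc, hab.trans hbc⟩
      · exact (hS.2 a h').imp fun b hb => ⟨Or.inr hb.1, hb.2⟩
  | @choiceCtx U U' V V' h h' _ _ => exact eqv_pair (.choice h h')

end Forward
section Sound

local infix:50 " ≋ " => UCongr

lemma uc_med {a b c d : Usage} :
    Usage.par (.par a b) (.par c d) ≋ Usage.par (.par a c) (.par b d) :=
  calc Usage.par (.par a b) (.par c d) ≋ Usage.par a (.par b (.par c d)) := uc_assoc'
    _ ≋ Usage.par a (.par (.par b c) d) := UCongr.parR .parAssoc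
    _ ≋ Usage.par a (.par (.par c b) d) := UCongr.parR (UCongr.parL .parComm)
    _ ≋ Usage.par a (.par c (.par b d)) := UCongr.parR uc_assoc'
    _ ≋ Usage.par (.par a c) (.par b d) := UCongr.parAssoc

lemma mexists (m : Multiset Usage) : ∃ l : List Usage, (l : Multiset Usage) = m :=
  ⟨m.toList, Multiset.coe_toList m⟩

/-- Every usage is congruent to a canonical two-layer form built from its decomposition. -/
lemma rebuild (U : Usage) : ∃ l s : List Usage, ((l : Multiset Usage) = (dec U).1) ∧
    ((s : Multiset Usage) = (dec U).2) ∧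
    U ≋ (buildL l).par (.bang (buildL s)) := by
  induction U with
  | nil =>
    exact ⟨[], [], by simp, by simp, .symm ((UCongr.parR .bangNil).trans .parNil)⟩
  | par U V ihU ihV =>
    obtain ⟨l1, s1, hl1, hs1, hc1⟩ := ihU
    obtain ⟨l2, s2, hl2, hs2, hc2⟩ := ihV
    refine ⟨l1 ++ l2, s1 ++ s2, by rw [← Multiset.coe_add, hl1, hl2, dec_par], by rw [← Multiset.coe_add, hs1, hs2, dec_par], ?_⟩
    calc Usage.par U V ≋ Usage.par ((buildL l1).par (.bang (buildL s1)))
          ((buildL l2).par (.bang (buildL s2))) := UCongr.parCtx hc1 hc2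
      _ ≋ Usage.par ((buildL l1).par (buildL l2))
          (Usage.par (.bang (buildL s1)) (.bang (buildL s2))) := uc_med
      _ ≋ Usage.par (buildL (l1 ++ l2)) (.bang (buildL (s1 ++ s2))) := by
          refine UCongr.parCtx (.symm (buildL_append _ _)) (.symm ?_)
          exact (UCongr.bangCtx (buildL_append _ _)).trans .bangPar
  | inp A c U ih =>
    refine ⟨[.inp A c U], [], by simp, by simp, ?_⟩
    calc Usage.inp A c U ≋ Usage.par (.inp A c U) .nil := .symm .parNil
      _ ≋ Usage.par (.par (.inp A c U) .nil) .nil := .symm .parNil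
      _ ≋ Usage.par (.par (.inp A c U) .nil) (.bang .nil) := UCongr.parR (.symm .bangNil)
  | out A c U ih =>
    refine ⟨[.out A c U], [], by simp, by simp, ?_⟩
    calc Usage.out A c U ≋ Usage.par (.out A c U) .nil := .symm .parNil
      _ ≋ Usage.par (.par (.out A c U) .nil) .nil := .symm .parNil
      _ ≋ Usage.par (.par (.out A c U) .nil) (.bang .nil) := UCongr.parR (.symm .bangNil)
  | choice U V ihU ihV =>
    refine ⟨[.choice U V], [], by simp, by simp, ?_⟩
    calc Usage.choice U V ≋ Usage.par (.choice U V) .nil := .symm .parNil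
      _ ≋ Usage.par (.par (.choice U V) .nil) .nil := .symm .parNil
      _ ≋ Usage.par (.par (.choice U V) .nil) (.bang .nil) := UCongr.parR (.symm .bangNil)
  | bang U ih =>
    obtain ⟨l1, s1, hl1, hs1, hc1⟩ := ih
    refine ⟨[], l1 ++ s1, by simp, by rw [← Multiset.coe_add, hl1, hs1, dec_bang], ?_⟩
    refine UCongr.trans ?_ (.symm uc_nil_par)
    calc Usage.bang U ≋ Usage.bang ((buildL l1).par (.bang (buildL s1))) := .bangCtx hc1
      _ ≋ Usage.par (.bang (buildL l1)) (.bang (.bang (buildL s1))) := .bangPar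
      _ ≋ Usage.par (.bang (buildL l1)) (.bang (buildL s1)) := UCongr.parR .bangBang
      _ ≋ Usage.bang ((buildL l1).par (buildL s1)) := .symm .bangPar
      _ ≋ Usage.bang (buildL (l1 ++ s1)) := .bangCtx (.symm (buildL_append _ _))

lemma rel_buildL : ∀ (l m : List Usage), Multiset.Rel ARel (l : Multiset Usage) m →
    buildL l ≋ buildL m := by
  intro l
  induction l with
  | nil =>
    intro m h
    rw [Multiset.coe_nil, Multiset.rel_zero_left, Multiset.coe_eq_zero] at h
    rw [h]
    exact .refl
  | cons a l ih =>
    intro m h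
    rw [← Multiset.cons_coe] at h
    obtain ⟨b, bs', hab, hrel, hm⟩ := Multiset.rel_cons_left.1 h
    have hbm : b ∈ m := by
      have : b ∈ (m : Multiset Usage) := hm ▸ Multiset.mem_cons_self b bs'
      simpa using this
    have hperm : m.Perm (b :: m.erase b) := m.perm_cons_erase hbm
    have hbs : bs' = ((m.erase b : List Usage) : Multiset Usage) := by
      have h1 : (m : Multiset Usage) = b ::ₘ (m.erase b : List Usage) := by
        rw [Multiset.coe_eq_coe.2 hperm, ← Multiset.cons_coe]
      rw [h1] at hm
      exact ((Multiset.cons_inj_right b).1 hm).symm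
    refine UCongr.trans ?_ (buildL_perm hperm.symm)
    simp only [buildL_cons]
    exact UCongr.parCtx hab.toUC (ih _ (hbs ▸ hrel))

/-- Soundness: the multiset characterization implies congruence. -/
theorem eqv_sound {U V : Usage} (h : Eqv (dec U) (dec V)) : U ≋ V := by
  obtain ⟨l, s, hl, hs, hcU⟩ := rebuild U
  obtain ⟨m, t, hm, ht, hcV⟩ := rebuild V
  obtain ⟨hS, La, Lb, Ma, Mb, h1, h2, hrel, hLb, hMb⟩ := h
  obtain ⟨la, hla⟩ := mexists La
  obtain ⟨lb, hlb⟩ := mexists Lb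
  obtain ⟨ma, hma⟩ := mexists Ma
  obtain ⟨mb, hmb⟩ := mexists Mb
  have hlperm : l.Perm (la ++ lb) := by
    rw [← Multiset.coe_eq_coe, ← Multiset.coe_add, hla, hlb, hl, h1]
  have hmperm : m.Perm (ma ++ mb) := by
    rw [← Multiset.coe_eq_coe, ← Multiset.coe_add, hma, hmb, hm, h2]
  have habsU : (buildL lb).par (.bang (buildL s)) ≋ .bang (buildL s) := by
    refine absorb_all ?_
    intro a ha
    obtain ⟨b, hb, hab⟩ := hLb a (by rw [← hlb]; exact Multiset.mem_coe.2 ha)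
    refine ⟨b, ?_, hab.toUC⟩
    rw [← Multiset.mem_coe, hs]; exact hb
  have habsV : (buildL mb).par (.bang (buildL t)) ≋ .bang (buildL t) := by
    refine absorb_all ?_
    intro a ha
    obtain ⟨b, hb, hab⟩ := hMb a (by rw [← hmb]; exact Multiset.mem_coe.2 ha)
    refine ⟨b, ?_, hab.toUC⟩
    rw [← Multiset.mem_coe, ht]; exact hb
  have hU' : U ≋ (buildL la).par (.bang (buildL s)) :=
    calc U ≋ (buildL l).par (.bang (buildL s)) := hcU
      _ ≋ (buildL (la ++ lb)).par (.bang (buildL s)) := UCongr.parL (buildL_perm hlperm)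
      _ ≋ ((buildL la).par (buildL lb)).par (.bang (buildL s)) :=
          UCongr.parL (buildL_append _ _)
      _ ≋ (buildL la).par ((buildL lb).par (.bang (buildL s))) := uc_assoc'
      _ ≋ (buildL la).par (.bang (buildL s)) := UCongr.parR habsU
  have hV' : V ≋ (buildL ma).par (.bang (buildL t)) :=
    calc V ≋ (buildL m).par (.bang (buildL t)) := hcV
      _ ≋ (buildL (ma ++ mb)).par (.bang (buildL t)) := UCongr.parL (buildL_perm hmperm)
      _ ≋ ((buildL ma).par (buildL mb)).par (.bang (buildL t)) :=
          UCongr.parL (buildL_append _ _)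
      _ ≋ (buildL ma).par ((buildL mb).par (.bang (buildL t))) := uc_assoc'
      _ ≋ (buildL ma).par (.bang (buildL t)) := UCongr.parR habsV
  have hlin : buildL la ≋ buildL ma := rel_buildL _ _ (by rw [hla, hma]; exact hrel)
  have hbang : Usage.bang (buildL s) ≋ Usage.bang (buildL t) := by
    refine bang_mset ?_ ?_
    · intro a ha
      obtain ⟨b, hb, hab⟩ := hS.1 a (by rw [← hs]; exact Multiset.mem_coe.2 ha)
      exact ⟨b, by rw [← Multiset.mem_coe, ht]; exact hb, hab.toUC⟩
    · intro b hb
      obtain ⟨a, ha, hba⟩ := hS.2 b (by rw [← ht]; exact Multiset.mem_coe.2 hb)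
      exact ⟨a, by rw [← Multiset.mem_coe, hs]; exact ha, hba.toUC⟩
  exact hU'.trans ((UCongr.parCtx hlin hbang).trans hV'.symm)

end Sound
section RedChar

local infix:50 " ≋ " => UCongr

lemma delay_cong {U V : Usage} (h : U ≋ V) (A : Interval) :
    U.delay A ≋ V.delay A := by
  induction h with
  | refl => exact .refl
  | symm _ ih => exact ih.symm
  | trans _ _ ih1 ih2 => exact ih1.trans ih2
  | parNil => exact .parNil
  | parComm => exact .parComm
  | parAssoc => exact .parAssoc
  | bangNil => exact .bangNil
  | bangUnfold => exact .bangUnfold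
  | bangPar => exact .bangPar
  | bangBang => exact .bangBang
  | parCtx _ _ ih1 ih2 => exact .parCtx ih1 ih2
  | inpCtx h _ => exact .inpCtx h
  | outCtx h _ => exact .outCtx h
  | bangCtx _ ih => exact .bangCtx ih
  | choiceCtx _ _ ih1 ih2 => exact .choiceCtx ih1 ih2

/-- Characterization of single-step (non-error) reduction. -/
theorem red_char {φ : Finset IVar} {Φ : CSet} {U : Usage} {R : URes}
    (h : URed φ Φ U R) : ∀ V', R = .ok V' →
    (∃ A ic W B jc X Y, goodSync φ Φ A ic B jc ∧
      U ≋ (Usage.inp A ic W).par ((Usage.out B jc X).par Y) ∧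
      V' ≋ ((W.par X).delay (A.join B)).par Y) ∨
    (∃ C D Y, U ≋ (Usage.choice C D).par Y ∧ (V' ≋ C.par Y ∨ V' ≋ D.par Y)) := by
  induction h with
  | @comm A ic B jc W X h =>
    intro V' hV
    injection hV with hV
    subst hV
    exact Or.inl ⟨A, ic, W, B, jc, X, .nil, h, UCongr.parR (.symm .parNil), .symm .parNil⟩
  | commErr h => intro V' hV; cases hV
  | @choiceL W X =>
    intro V' hV
    injection hV with hV
    subst hV
    exact Or.inr ⟨W, X, .nil, .symm .parNil, Or.inl (.symm .parNil)⟩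
  | @choiceR W X =>
    intro V' hV
    injection hV with hV
    subst hV
    exact Or.inr ⟨W, X, .nil, .symm .parNil, Or.inr (.symm .parNil)⟩
  | @parCtx W W' Z h ih =>
    intro V' hV
    injection hV with hV
    rcases ih W' rfl with ⟨A, ic, W₁, B, jc, X₁, Y, hs, hU, hV'⟩ |
      ⟨C, D, Y, hU, hV'⟩
    · refine Or.inl ⟨A, ic, W₁, B, jc, X₁, Y.par Z, hs, ?_, ?_⟩
      · calc Usage.par W Z
            ≋ ((Usage.inp A ic W₁).par ((Usage.out B jc X₁).par Y)).par Z := UCongr.parL hU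
          _ ≋ (Usage.inp A ic W₁).par (((Usage.out B jc X₁).par Y).par Z) := uc_assoc'
          _ ≋ (Usage.inp A ic W₁).par ((Usage.out B jc X₁).par (Y.par Z)) :=
              UCongr.parR uc_assoc'
      · rw [← hV]
        calc Usage.par W' Z
            ≋ (((W₁.par X₁).delay (A.join B)).par Y).par Z := UCongr.parL hV'
          _ ≋ ((W₁.par X₁).delay (A.join B)).par (Y.par Z) := uc_assoc'
    · refine Or.inr ⟨C, D, Y.par Z, ?_, ?_⟩
      · exact (UCongr.parL hU).trans uc_assoc'
      · rw [← hV]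
        rcases hV' with h' | h'
        · exact Or.inl ((UCongr.parL h').trans uc_assoc')
        · exact Or.inr ((UCongr.parL h').trans uc_assoc')
  | parErr h ih => intro V' hV; cases hV
  | @congr W W' R' R hU h2 h3 ih =>
    intro V' hV
    subst hV
    cases h3 with
    | @ok V₀ V₁ hc =>
      rcases ih V₀ rfl with ⟨A, ic, W₁, B, jc, X₁, Y, hs, hU', hV'⟩ | ⟨C, D, Y, hU', hV'⟩
      · exact Or.inl ⟨A, ic, W₁, B, jc, X₁, Y, hs, hU.trans hU', hc.symm.trans hV'⟩
      · refine Or.inr ⟨C, D, Y, hU.trans hU', ?_⟩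
        rcases hV' with h' | h'
        · exact Or.inl (hc.symm.trans h')
        · exact Or.inr (hc.symm.trans h')

end RedChar
section Extract

local infix:50 " ≋ " => UCongr

lemma uc_swap {a b c : Usage} : a.par (b.par c) ≋ b.par (a.par c) :=
  UCongr.parAssoc.trans ((UCongr.parL .parComm).trans uc_assoc')

lemma pull_bang {a : Usage} {l s : List Usage} (h : a ∈ s) :
    (buildL l).par (.bang (buildL s)) ≋ a.par ((buildL l).par (.bang (buildL s))) :=
  calc (buildL l).par (Usage.bang (buildL s))
      ≋ (buildL l).par ((Usage.bang (buildL s)).par a) := UCongr.parR (bang_emit h)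
    _ ≋ ((buildL l).par (Usage.bang (buildL s))).par a := UCongr.parAssoc
    _ ≋ a.par ((buildL l).par (Usage.bang (buildL s))) := UCongr.parComm

/-- Extract one atom `i` from the right-hand side of an `Eqv`-style matching. -/
lemma extract {Sstar SY M Ma Mb La : Multiset Usage} {i : Usage}
    (hsl : MSet Sstar SY) (hM : i ::ₘ M = Ma + Mb)
    (hrel : Multiset.Rel ARel La Ma) (habs : MAbs SY Mb) :
    ∃ a_i La' Ma' Mb', ARel a_i i ∧ M = Ma' + Mb' ∧ Multiset.Rel ARel La' Ma' ∧
      MAbs SY Mb' ∧ (La = a_i ::ₘ La' ∨ (a_i ∈ Sstar ∧ La' = La)) := by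
  have hi : i ∈ Ma + Mb := by rw [← hM]; exact Multiset.mem_cons_self _ _
  rcases Multiset.mem_add.1 hi with hia | hib
  · have hMa : Ma = i ::ₘ Ma.erase i := (Multiset.cons_erase hia).symm
    rw [hMa] at hrel
    obtain ⟨a, as', hai, hrel', hLa⟩ := Multiset.rel_cons_right.1 hrel
    have hMeq : M = Ma.erase i + Mb := by
      have h' : i ::ₘ M = i ::ₘ (Ma.erase i + Mb) := by
        rw [hM]
        conv_lhs => rw [hMa]
        rw [Multiset.cons_add]
      exact (Multiset.cons_inj_right i).1 h'
    exact ⟨a, as', Ma.erase i, Mb, hai, hMeq, hrel', habs, Or.inl hLa⟩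
  · obtain ⟨s, hs, his⟩ := habs i hib
    obtain ⟨t, ht, hst⟩ := hsl.2 s hs
    have hMeq : M = Ma + Mb.erase i := by
      have hMb' : Mb = {i} + Mb.erase i := by
        rw [Multiset.singleton_add, Multiset.cons_erase hib]
      have h2' : Ma + Mb = {i} + (Ma + Mb.erase i) := by
        conv_lhs => rw [hMb']
        rw [add_left_comm]
      have h' : ({i} : Multiset Usage) + M = {i} + (Ma + Mb.erase i) := by
        rw [Multiset.singleton_add, hM, h2']
      exact add_left_cancel h'
    exact ⟨t, La, Ma, Mb.erase i, hst.symm.trans his.symm, hMeq, hrel,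
      MAbs.mono_sub (Multiset.erase_le i Mb) habs, Or.inr ⟨ht, rfl⟩⟩

/-- Assemble the conclusion from standardized extraction data (two atoms). -/
lemma finish2 {U₀ U₁ Y ai ao : Usage} {ui uo KR La2 Ma2 Mb2 : Multiset Usage}
    (hpool : (dec U₀).1 + (dec U₁).1 = ui + (uo + (La2 + KR)))
    (hui : ui = {ai} ∨ (ui = 0 ∧ ai ∈ (dec U₀).2 + (dec U₁).2))
    (huo : uo = {ao} ∨ (uo = 0 ∧ ao ∈ (dec U₀).2 + (dec U₁).2))
    (hKR : MAbs (((dec U₀).2 + (dec U₁).2) + ((dec U₁).1 + (dec U₁).2)) KR)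
    (hrel2 : Multiset.Rel ARel La2 Ma2) (hM2 : (dec Y).1 = Ma2 + Mb2)
    (habs2 : MAbs (dec Y).2 Mb2)
    (hS : MSet ((dec U₀).2 + ((dec U₁).1 + (dec U₁).2)) (dec Y).2) :
    ∃ Z, (Usage.par U₀ U₁ ≋ ai.par (ao.par Z)) ∧ (Y ≋ Z.par (.bang U₁)) := by
  obtain ⟨lfull, sfull, hlf, hsf, hcf⟩ := rebuild (Usage.par U₀ U₁)
  simp only [dec_par] at hlf hsf
  obtain ⟨lK, hlK⟩ := mexists (La2 + KR)
  set K := La2 + KR with hKdef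
  have hKmem : ∀ a ∈ K, a ∈ (dec U₀).1 + (dec U₁).1 := by
    intro a ha
    rw [hpool]
    exact Multiset.mem_add.2 (Or.inr (Multiset.mem_add.2 (Or.inr ha)))
  have hKatom : ∀ a ∈ lK, IsAtom a := by
    intro a ha
    have : a ∈ K := by rw [← hlK]; exact Multiset.mem_coe.2 ha
    rcases Multiset.mem_add.1 (hKmem a this) with h' | h'
    · exact dec_atoms1 h'
    · exact dec_atoms1 h'
  have hsatom : ∀ a ∈ sfull, IsAtom a := by
    intro a ha
    have : a ∈ (dec U₀).2 + (dec U₁).2 := by rw [← hsf]; exact Multiset.mem_coe.2 ha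
    rcases Multiset.mem_add.1 this with h' | h'
    · exact dec_atoms2 h'
    · exact dec_atoms2 h'
  set Z := (buildL lK).par (.bang (buildL sfull)) with hZdef
  refine ⟨Z, ?_, ?_⟩
  · -- U₀ | U₁ ≋ ai | (ao | Z)
    have base : Usage.par U₀ U₁ ≋ (buildL lfull).par (.bang (buildL sfull)) := hcf
    rcases hui with hui | ⟨hui, hmi⟩
    · rcases huo with huo | ⟨huo, hmo⟩
      · -- both linear
        have hperm : lfull.Perm (ai :: ao :: lK) := by
          rw [← Multiset.coe_eq_coe]
          rw [hlf, hpool, hui, huo, ← hlK]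
          simp [Multiset.singleton_add]
        refine base.trans ?_
        calc (buildL lfull).par (.bang (buildL sfull))
            ≋ (buildL (ai :: ao :: lK)).par (.bang (buildL sfull)) :=
              UCongr.parL (buildL_perm hperm)
          _ ≋ ai.par ((buildL (ao :: lK)).par (.bang (buildL sfull))) := by
              simp only [buildL_cons]; exact uc_assoc'
          _ ≋ ai.par (ao.par Z) := by
              refine UCongr.parR ?_
              simp only [buildL_cons]; exact uc_assoc'
      · -- i linear, o banged
        have hperm : lfull.Perm (ai :: lK) := by
          rw [← Multiset.coe_eq_coe]
          rw [hlf, hpool, hui, huo, ← hlK]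
          simp [Multiset.singleton_add]
        have hmo' : ao ∈ sfull := by
          rw [← Multiset.mem_coe, hsf]; exact hmo
        refine base.trans ?_
        calc (buildL lfull).par (.bang (buildL sfull))
            ≋ (buildL (ai :: lK)).par (.bang (buildL sfull)) :=
              UCongr.parL (buildL_perm hperm)
          _ ≋ ai.par Z := by simp only [buildL_cons]; exact uc_assoc'
          _ ≋ ai.par (ao.par Z) := UCongr.parR (pull_bang hmo')
    · rcases huo with huo | ⟨huo, hmo⟩
      · -- i banged, o linear
        have hperm : lfull.Perm (ao :: lK) := by
          rw [← Multiset.coe_eq_coe]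
          rw [hlf, hpool, hui, huo, ← hlK]
          simp [Multiset.singleton_add]
        have hmi' : ai ∈ sfull := by
          rw [← Multiset.mem_coe, hsf]; exact hmi
        refine base.trans ?_
        calc (buildL lfull).par (.bang (buildL sfull))
            ≋ (buildL (ao :: lK)).par (.bang (buildL sfull)) :=
              UCongr.parL (buildL_perm hperm)
          _ ≋ ao.par Z := by simp only [buildL_cons]; exact uc_assoc'
          _ ≋ ao.par (ai.par Z) := UCongr.parR (pull_bang hmi')
          _ ≋ ai.par (ao.par Z) := uc_swap
      · -- both banged
        have hperm : lfull.Perm lK := by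
          rw [← Multiset.coe_eq_coe]
          rw [hlf, hpool, hui, huo, ← hlK]
          simp
        have hmi' : ai ∈ sfull := by
          rw [← Multiset.mem_coe, hsf]; exact hmi
        have hmo' : ao ∈ sfull := by
          rw [← Multiset.mem_coe, hsf]; exact hmo
        refine base.trans ?_
        calc (buildL lfull).par (.bang (buildL sfull))
            ≋ Z := UCongr.parL (buildL_perm hperm)
          _ ≋ ai.par Z := pull_bang hmi'
          _ ≋ ai.par (ao.par Z) := UCongr.parR (pull_bang hmo')
  · -- Y ≋ Z | !U₁
    have hdec : dec (Z.par (.bang U₁)) =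
        (K, ((dec U₀).2 + (dec U₁).2) + ((dec U₁).1 + (dec U₁).2)) := by
      rw [hZdef]
      simp only [dec_par, dec_bang, dec_buildL hKatom, dec_buildL hsatom]
      rw [hlK, hsf]
      simp
    refine (eqv_sound (U := Z.par (.bang U₁)) (V := Y) ?_).symm
    rw [hdec]
    refine ⟨?_, La2, KR, Ma2, Mb2, rfl, hM2, hrel2, hKR, habs2⟩
    constructor
    · intro a ha
      refine hS.1 a ?_
      simp only [Multiset.mem_add] at ha ⊢
      tauto
    · intro b hb
      obtain ⟨a, ha, hba⟩ := hS.2 b hb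
      refine ⟨a, ?_, hba⟩
      simp only [Multiset.mem_add] at ha ⊢
      tauto

/-- Assemble the conclusion from standardized extraction data (one atom). -/
lemma finish1 {U₀ U₁ Y ac : Usage} {uc KR La2 Ma2 Mb2 : Multiset Usage}
    (hpool : (dec U₀).1 + (dec U₁).1 = uc + (La2 + KR))
    (huc : uc = {ac} ∨ (uc = 0 ∧ ac ∈ (dec U₀).2 + (dec U₁).2))
    (hKR : MAbs (((dec U₀).2 + (dec U₁).2) + ((dec U₁).1 + (dec U₁).2)) KR)
    (hrel2 : Multiset.Rel ARel La2 Ma2) (hM2 : (dec Y).1 = Ma2 + Mb2)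
    (habs2 : MAbs (dec Y).2 Mb2)
    (hS : MSet ((dec U₀).2 + ((dec U₁).1 + (dec U₁).2)) (dec Y).2) :
    ∃ Z, (Usage.par U₀ U₁ ≋ ac.par Z) ∧ (Y ≋ Z.par (.bang U₁)) := by
  obtain ⟨lfull, sfull, hlf, hsf, hcf⟩ := rebuild (Usage.par U₀ U₁)
  simp only [dec_par] at hlf hsf
  obtain ⟨lK, hlK⟩ := mexists (La2 + KR)
  set K := La2 + KR with hKdef
  have hKmem : ∀ a ∈ K, a ∈ (dec U₀).1 + (dec U₁).1 := by
    intro a ha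
    rw [hpool]
    exact Multiset.mem_add.2 (Or.inr ha)
  have hKatom : ∀ a ∈ lK, IsAtom a := by
    intro a ha
    have : a ∈ K := by rw [← hlK]; exact Multiset.mem_coe.2 ha
    rcases Multiset.mem_add.1 (hKmem a this) with h' | h'
    · exact dec_atoms1 h'
    · exact dec_atoms1 h'
  have hsatom : ∀ a ∈ sfull, IsAtom a := by
    intro a ha
    have : a ∈ (dec U₀).2 + (dec U₁).2 := by rw [← hsf]; exact Multiset.mem_coe.2 ha
    rcases Multiset.mem_add.1 this with h' | h'
    · exact dec_atoms2 h'
    · exact dec_atoms2 h'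
  set Z := (buildL lK).par (.bang (buildL sfull)) with hZdef
  refine ⟨Z, ?_, ?_⟩
  · have base : Usage.par U₀ U₁ ≋ (buildL lfull).par (.bang (buildL sfull)) := hcf
    rcases huc with huc | ⟨huc, hmc⟩
    · have hperm : lfull.Perm (ac :: lK) := by
        rw [← Multiset.coe_eq_coe]
        rw [hlf, hpool, huc, ← hlK]
        simp [Multiset.singleton_add]
      refine base.trans ?_
      calc (buildL lfull).par (.bang (buildL sfull))
          ≋ (buildL (ac :: lK)).par (.bang (buildL sfull)) :=
            UCongr.parL (buildL_perm hperm)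
        _ ≋ ac.par Z := by simp only [buildL_cons]; exact uc_assoc'
    · have hperm : lfull.Perm lK := by
        rw [← Multiset.coe_eq_coe]
        rw [hlf, hpool, huc, ← hlK]
        simp
      have hmc' : ac ∈ sfull := by
        rw [← Multiset.mem_coe, hsf]; exact hmc
      refine base.trans ?_
      calc (buildL lfull).par (.bang (buildL sfull))
          ≋ Z := UCongr.parL (buildL_perm hperm)
        _ ≋ ac.par Z := pull_bang hmc'
  · have hdec : dec (Z.par (.bang U₁)) =
        (K, ((dec U₀).2 + (dec U₁).2) + ((dec U₁).1 + (dec U₁).2)) := by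
      rw [hZdef]
      simp only [dec_par, dec_bang, dec_buildL hKatom, dec_buildL hsatom]
      rw [hlK, hsf]
      simp
    refine (eqv_sound (U := Z.par (.bang U₁)) (V := Y) ?_).symm
    rw [hdec]
    refine ⟨?_, La2, KR, Ma2, Mb2, rfl, hM2, hrel2, hKR, habs2⟩
    constructor
    · intro a ha
      refine hS.1 a ?_
      simp only [Multiset.mem_add] at ha ⊢
      tauto
    · intro b hb
      obtain ⟨a, ha, hba⟩ := hS.2 b hb
      refine ⟨a, ?_, hba⟩
      simp only [Multiset.mem_add] at ha ⊢
      tauto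

end Extract
section MainExtract

local infix:50 " ≋ " => UCongr

lemma main_extract2 {U₀ U₁ Y i o : Usage}
    (hne : ∀ a, ARel a i → ARel a o → False)
    (h : Eqv (dec (Usage.par U₀ (.bang U₁))) (i ::ₘ o ::ₘ (dec Y).1, (dec Y).2)) :
    ∃ a_i a_o Z, ARel a_i i ∧ ARel a_o o ∧
      (Usage.par U₀ U₁ ≋ a_i.par (a_o.par Z)) ∧ (Y ≋ Z.par (.bang U₁)) := by
  obtain ⟨hS, La, Lb, Ma, Mb, h1, h2, hrel, hLb, hMb⟩ := h
  simp only [dec_par, dec_bang, add_zero] at hS h1 hLb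
  dsimp only at h2 hMb hS h1 hLb
  obtain ⟨ai, La1, Ma1, Mb1, hai, hM1, hrel1, habs1, hcase_i⟩ := extract hS h2 hrel hMb
  obtain ⟨ao, La2, Ma2, Mb2, hao, hM2, hrel2, habs2, hcase_o⟩ := extract hS hM1 hrel1 habs1
  have hne' : ai ≠ ao := fun he => hne ai hai (he ▸ hao)
  have hLbSZ : MAbs (((dec U₀).2 + (dec U₁).2) + ((dec U₁).1 + (dec U₁).2)) Lb := by
    refine MAbs.mono_mem ?_ hLb
    intro b hb
    simp only [Multiset.mem_add] at hb ⊢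
    tauto
  have hL1SZ : ∀ (m : Multiset Usage), m ≤ (dec U₁).1 →
      MAbs (((dec U₀).2 + (dec U₁).2) + ((dec U₁).1 + (dec U₁).2)) m := by
    intro m hm a ha
    have ha' : a ∈ (dec U₁).1 := Multiset.mem_of_le hm ha
    exact ⟨a, by simp only [Multiset.mem_add]; tauto, ARel.rfl (dec_atoms1 ha')⟩
  refine ⟨ai, ao, ?_⟩
  rcases hcase_i with hA | ⟨hmi, hLa1⟩
  · rcases hcase_o with hB | ⟨hmo, hLa2⟩
    · -- lin0, lin0
      obtain ⟨Z, hZ1, hZ2⟩ := finish2 (Y := Y) (ai := ai) (ao := ao)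
        (ui := {ai}) (uo := {ao}) (KR := Lb + (dec U₁).1)
        (by rw [h1, hA, hB]; simp only [← Multiset.singleton_add]; abel)
        (Or.inl rfl) (Or.inl rfl)
        (MAbs.add hLbSZ (hL1SZ _ le_rfl)) hrel2 hM2 habs2 hS
      exact ⟨Z, hai, hao, hZ1, hZ2⟩
    · subst hLa2
      rcases Multiset.mem_add.1 hmo with hmo' | hmo'
      · -- lin0, bang (S0)
        obtain ⟨Z, hZ1, hZ2⟩ := finish2 (Y := Y) (ai := ai) (ao := ao)
          (ui := {ai}) (uo := 0) (KR := Lb + (dec U₁).1)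
          (by rw [h1, hA]; simp only [← Multiset.singleton_add]; abel)
          (Or.inl rfl) (Or.inr ⟨rfl, by simp only [Multiset.mem_add]; tauto⟩)
          (MAbs.add hLbSZ (hL1SZ _ le_rfl)) hrel2 hM2 habs2 hS
        exact ⟨Z, hai, hao, hZ1, hZ2⟩
      rcases Multiset.mem_add.1 hmo' with hmo'' | hmo''
      · -- lin0, lin1
        have hL1 : (dec U₁).1 = ao ::ₘ ((dec U₁).1).erase ao := (Multiset.cons_erase hmo'').symm
        obtain ⟨Z, hZ1, hZ2⟩ := finish2 (Y := Y) (ai := ai) (ao := ao)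
          (ui := {ai}) (uo := {ao}) (KR := Lb + ((dec U₁).1).erase ao)
          (by rw [h1, hA]; conv_lhs => rw [hL1]
              simp only [← Multiset.singleton_add]; abel)
          (Or.inl rfl) (Or.inl rfl)
          (MAbs.add hLbSZ (hL1SZ _ (Multiset.erase_le _ _))) hrel2 hM2 habs2 hS
        exact ⟨Z, hai, hao, hZ1, hZ2⟩
      · -- lin0, bang (S1)
        obtain ⟨Z, hZ1, hZ2⟩ := finish2 (Y := Y) (ai := ai) (ao := ao)
          (ui := {ai}) (uo := 0) (KR := Lb + (dec U₁).1)
          (by rw [h1, hA]; simp only [← Multiset.singleton_add]; abel)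
          (Or.inl rfl) (Or.inr ⟨rfl, by simp only [Multiset.mem_add]; tauto⟩)
          (MAbs.add hLbSZ (hL1SZ _ le_rfl)) hrel2 hM2 habs2 hS
        exact ⟨Z, hai, hao, hZ1, hZ2⟩
  · subst hLa1
    have hICase : (ai ∈ (dec U₀).2 + (dec U₁).2 ∧ (dec U₁).1 = (dec U₁).1) ∨
        ai ∈ (dec U₁).1 := by
      rcases Multiset.mem_add.1 hmi with h' | h'
      · exact Or.inl ⟨by simp only [Multiset.mem_add]; tauto, rfl⟩
      rcases Multiset.mem_add.1 h' with h'' | h''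
      · exact Or.inr h''
      · exact Or.inl ⟨by simp only [Multiset.mem_add]; tauto, rfl⟩
    rcases hcase_o with hB | ⟨hmo, hLa2⟩
    · rcases hICase with ⟨hmi', _⟩ | hmi'
      · -- bang, lin0
        obtain ⟨Z, hZ1, hZ2⟩ := finish2 (Y := Y) (ai := ai) (ao := ao)
          (ui := 0) (uo := {ao}) (KR := Lb + (dec U₁).1)
          (by rw [h1, hB]; simp only [← Multiset.singleton_add]; abel)
          (Or.inr ⟨rfl, hmi'⟩) (Or.inl rfl)
          (MAbs.add hLbSZ (hL1SZ _ le_rfl)) hrel2 hM2 habs2 hS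
        exact ⟨Z, hai, hao, hZ1, hZ2⟩
      · -- lin1, lin0
        have hL1 : (dec U₁).1 = ai ::ₘ ((dec U₁).1).erase ai := (Multiset.cons_erase hmi').symm
        obtain ⟨Z, hZ1, hZ2⟩ := finish2 (Y := Y) (ai := ai) (ao := ao)
          (ui := {ai}) (uo := {ao}) (KR := Lb + ((dec U₁).1).erase ai)
          (by rw [h1, hB]; conv_lhs => rw [hL1]
              simp only [← Multiset.singleton_add]; abel)
          (Or.inl rfl) (Or.inl rfl)
          (MAbs.add hLbSZ (hL1SZ _ (Multiset.erase_le _ _))) hrel2 hM2 habs2 hS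
        exact ⟨Z, hai, hao, hZ1, hZ2⟩
    · subst hLa2
      have hOCase : (ao ∈ (dec U₀).2 + (dec U₁).2 ∧ (dec U₁).1 = (dec U₁).1) ∨
          ao ∈ (dec U₁).1 := by
        rcases Multiset.mem_add.1 hmo with h' | h'
        · exact Or.inl ⟨by simp only [Multiset.mem_add]; tauto, rfl⟩
        rcases Multiset.mem_add.1 h' with h'' | h''
        · exact Or.inr h''
        · exact Or.inl ⟨by simp only [Multiset.mem_add]; tauto, rfl⟩
      rcases hICase with ⟨hmi', _⟩ | hmi'
      · rcases hOCase with ⟨hmo', _⟩ | hmo'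
        · -- bang, bang
          obtain ⟨Z, hZ1, hZ2⟩ := finish2 (Y := Y) (ai := ai) (ao := ao)
            (ui := 0) (uo := 0) (KR := Lb + (dec U₁).1)
            (by rw [h1]; abel)
            (Or.inr ⟨rfl, hmi'⟩) (Or.inr ⟨rfl, hmo'⟩)
            (MAbs.add hLbSZ (hL1SZ _ le_rfl)) hrel2 hM2 habs2 hS
          exact ⟨Z, hai, hao, hZ1, hZ2⟩
        · -- bang, lin1
          have hL1 : (dec U₁).1 = ao ::ₘ ((dec U₁).1).erase ao :=
            (Multiset.cons_erase hmo').symm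
          obtain ⟨Z, hZ1, hZ2⟩ := finish2 (Y := Y) (ai := ai) (ao := ao)
            (ui := 0) (uo := {ao}) (KR := Lb + ((dec U₁).1).erase ao)
            (by rw [h1]; conv_lhs => rw [hL1]
                simp only [← Multiset.singleton_add]; abel)
            (Or.inr ⟨rfl, hmi'⟩) (Or.inl rfl)
            (MAbs.add hLbSZ (hL1SZ _ (Multiset.erase_le _ _))) hrel2 hM2 habs2 hS
          exact ⟨Z, hai, hao, hZ1, hZ2⟩
      · rcases hOCase with ⟨hmo', _⟩ | hmo'
        · -- lin1, bang
          have hL1 : (dec U₁).1 = ai ::ₘ ((dec U₁).1).erase ai :=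
            (Multiset.cons_erase hmi').symm
          obtain ⟨Z, hZ1, hZ2⟩ := finish2 (Y := Y) (ai := ai) (ao := ao)
            (ui := {ai}) (uo := 0) (KR := Lb + ((dec U₁).1).erase ai)
            (by rw [h1]; conv_lhs => rw [hL1]
                simp only [← Multiset.singleton_add]; abel)
            (Or.inl rfl) (Or.inr ⟨rfl, hmo'⟩)
            (MAbs.add hLbSZ (hL1SZ _ (Multiset.erase_le _ _))) hrel2 hM2 habs2 hS
          exact ⟨Z, hai, hao, hZ1, hZ2⟩
        · -- lin1, lin1
          have hmo'' : ao ∈ ((dec U₁).1).erase ai :=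
            (Multiset.mem_erase_of_ne (fun he => hne' he.symm)).2 hmo'
          have hL1 : (dec U₁).1 = ai ::ₘ ((dec U₁).1).erase ai :=
            (Multiset.cons_erase hmi').symm
          have hL1' : ((dec U₁).1).erase ai = ao ::ₘ (((dec U₁).1).erase ai).erase ao :=
            (Multiset.cons_erase hmo'').symm
          obtain ⟨Z, hZ1, hZ2⟩ := finish2 (Y := Y) (ai := ai) (ao := ao)
            (ui := {ai}) (uo := {ao}) (KR := Lb + ((((dec U₁).1).erase ai).erase ao))
            (by rw [h1]; conv_lhs => rw [hL1, hL1']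
                simp only [← Multiset.singleton_add]; abel)
            (Or.inl rfl) (Or.inl rfl)
            (MAbs.add hLbSZ
              (hL1SZ _ ((Multiset.erase_le _ _).trans (Multiset.erase_le _ _))))
            hrel2 hM2 habs2 hS
          exact ⟨Z, hai, hao, hZ1, hZ2⟩

lemma main_extract1 {U₀ U₁ Y c : Usage}
    (h : Eqv (dec (Usage.par U₀ (.bang U₁))) (c ::ₘ (dec Y).1, (dec Y).2)) :
    ∃ a_c Z, ARel a_c c ∧
      (Usage.par U₀ U₁ ≋ a_c.par Z) ∧ (Y ≋ Z.par (.bang U₁)) := by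
  obtain ⟨hS, La, Lb, Ma, Mb, h1, h2, hrel, hLb, hMb⟩ := h
  simp only [dec_par, dec_bang, add_zero] at hS h1 hLb
  dsimp only at h2 hMb hS h1 hLb
  obtain ⟨ac, La2, Ma2, Mb2, hac, hM2, hrel2, habs2, hcase⟩ := extract hS h2 hrel hMb
  have hLbSZ : MAbs (((dec U₀).2 + (dec U₁).2) + ((dec U₁).1 + (dec U₁).2)) Lb := by
    refine MAbs.mono_mem ?_ hLb
    intro b hb
    simp only [Multiset.mem_add] at hb ⊢
    tauto
  have hL1SZ : ∀ (m : Multiset Usage), m ≤ (dec U₁).1 →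
      MAbs (((dec U₀).2 + (dec U₁).2) + ((dec U₁).1 + (dec U₁).2)) m := by
    intro m hm a ha
    have ha' : a ∈ (dec U₁).1 := Multiset.mem_of_le hm ha
    exact ⟨a, by simp only [Multiset.mem_add]; tauto, ARel.rfl (dec_atoms1 ha')⟩
  refine ⟨ac, ?_⟩
  rcases hcase with hA | ⟨hmc, hLa2⟩
  · obtain ⟨Z, hZ1, hZ2⟩ := finish1 (Y := Y) (ac := ac)
      (uc := {ac}) (KR := Lb + (dec U₁).1)
      (by rw [h1, hA]; simp only [← Multiset.singleton_add]; abel)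
      (Or.inl rfl)
      (MAbs.add hLbSZ (hL1SZ _ le_rfl)) hrel2 hM2 habs2 hS
    exact ⟨Z, hac, hZ1, hZ2⟩
  · subst hLa2
    have hCase : ac ∈ (dec U₀).2 + (dec U₁).2 ∨ ac ∈ (dec U₁).1 := by
      rcases Multiset.mem_add.1 hmc with h' | h'
      · exact Or.inl (by simp only [Multiset.mem_add]; tauto)
      rcases Multiset.mem_add.1 h' with h'' | h''
      · exact Or.inr h''
      · exact Or.inl (by simp only [Multiset.mem_add]; tauto)
    rcases hCase with hm' | hm'
    · obtain ⟨Z, hZ1, hZ2⟩ := finish1 (Y := Y) (ac := ac)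
        (uc := 0) (KR := Lb + (dec U₁).1)
        (by rw [h1]; abel)
        (Or.inr ⟨rfl, hm'⟩)
        (MAbs.add hLbSZ (hL1SZ _ le_rfl)) hrel2 hM2 habs2 hS
      exact ⟨Z, hac, hZ1, hZ2⟩
    · have hL1 : (dec U₁).1 = ac ::ₘ ((dec U₁).1).erase ac := (Multiset.cons_erase hm').symm
      obtain ⟨Z, hZ1, hZ2⟩ := finish1 (Y := Y) (ac := ac)
        (uc := {ac}) (KR := Lb + ((dec U₁).1).erase ac)
        (by rw [h1]; conv_lhs => rw [hL1]
            simp only [← Multiset.singleton_add]; abel)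
        (Or.inl rfl)
        (MAbs.add hLbSZ (hL1SZ _ (Multiset.erase_le _ _))) hrel2 hM2 habs2 hS
      exact ⟨Z, hac, hZ1, hZ2⟩

end MainExtract
/-- If `V ≡ U₀ | !U₁` and `φ; Φ ⊢ V ⟶ V'` (one step of usage
reduction), then `V' ≡ W | !U₁` for some usage `W` with `φ; Φ ⊢ U₀ | U₁ ⟶ W`. -/
theorem replication_and_reduction (φ : Finset IVar) (Φ : CSet) (V U₀ U₁ V' : Usage)
    (hcong : UCongr V (.par U₀ (.bang U₁))) (hred : URed φ Φ V (.ok V')) :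
    ∃ W : Usage, UCongr V' (.par W (.bang U₁)) ∧ URed φ Φ (.par U₀ U₁) (.ok W) := by
  rcases red_char hred V' rfl with ⟨A, ic, W, B, jc, X, Y, hs, hU, hV'⟩ | ⟨C, D, Y, hU, hV'⟩
  · -- communication redex
    have heqv := ucongr_eqv (hcong.symm.trans hU)
    have hdq : dec ((Usage.inp A ic W).par ((Usage.out B jc X).par Y)) =
        (Usage.inp A ic W ::ₘ Usage.out B jc X ::ₘ (dec Y).1, (dec Y).2) := by
      simp only [dec_par, dec_inp, dec_out, Multiset.singleton_add, zero_add]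
    rw [hdq] at heqv
    have hne : ∀ a, ARel a (Usage.inp A ic W) → ARel a (Usage.out B jc X) → False := by
      intro a h1 h2
      cases h1
      cases h2
    obtain ⟨ai, ao, Z, hai, hao, hcg, hYZ⟩ := main_extract2 hne heqv
    cases hai with
    | @inp _ _ u _ hWu =>
      cases hao with
      | @out _ _ v _ hXv =>
        refine ⟨((u.par v).delay (A.join B)).par Z, ?_, ?_⟩
        · exact hV'.trans ((UCongr.parL
            (delay_cong (UCongr.parCtx hWu.symm hXv.symm) _)).trans
            ((UCongr.parR hYZ).trans UCongr.parAssoc))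
        · exact .congr (hcg.trans .parAssoc) (.parCtx (.comm hs)) (.ok .refl)
  · -- choice redex
    have heqv := ucongr_eqv (hcong.symm.trans hU)
    have hdq : dec ((Usage.choice C D).par Y) =
        (Usage.choice C D ::ₘ (dec Y).1, (dec Y).2) := by
      simp only [dec_par, dec_choice, Multiset.singleton_add, zero_add]
    rw [hdq] at heqv
    obtain ⟨ac, Z, hac, hcg, hYZ⟩ := main_extract1 heqv
    cases hac with
    | @choice u v _ _ hC hD =>
      rcases hV' with h' | h'
      · refine ⟨u.par Z, ?_, ?_⟩
        · exact h'.trans ((UCongr.parCtx hC.symm hYZ).trans UCongr.parAssoc)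
        · exact .congr hcg (.parCtx .choiceL) (.ok .refl)
      · refine ⟨v.par Z, ?_, ?_⟩
        · exact h'.trans ((UCongr.parCtx hD.symm hYZ).trans UCongr.parAssoc)
        · exact .congr hcg (.parCtx .choiceR) (.ok .refl)

end PiSpan
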